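/- Let f be an irreducible Weierstrass polynomial with Puiseux characteristic (b₀,...,b_g), γ a fixed Newton–Puiseux root of f, and k < g. Then α₃ := Σ O(γ_i, γ) over all roots γ_i with O(γ_i,γ) < b_{k+1}/b₀ equals (n - l₁)(b₁/b₀) + (l₁ - l₂)(b₂/b₀) + ... + (l_{k-1} - l_k)(b_k/b₀), where n = b₀ and l_i = gcd(b₀,...,b_i). -/

import Mathlib

noncomputable section

open Polynomial

/-- The substitution `x^{1/n} ↦ ε·x^{1/n}` on fractional power series: it sends
`Σ a_{i} x^{i/n}` to `Σ a_{i} ε^{i} x^{i/n}` (here the exponent of `ε` at `x^q`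
is the integer `q·n`). -/
def twist (n : ℕ) (ε : ℂ) (γ : HahnSeries ℚ ℂ) : HahnSeries ℚ ℂ where
  coeff q := ε ^ (q * n : ℚ).num * γ.coeff q
  isPWO_support' := γ.isPWO_support.mono (by
    intro q hq
    simp only [Function.mem_support] at hq ⊢
    intro h
    simp [h] at hq)

open scoped Classical

lemma twist_coeff (n : ℕ) (ε : ℂ) (γ : HahnSeries ℚ ℂ) (q : ℚ) :
    (twist n ε γ).coeff q = ε ^ (q * n : ℚ).num * γ.coeff q := rfl

lemma order_eq_of_forall {x : HahnSeries ℚ ℂ} {q : ℚ} (h1 : x.coeff q ≠ 0)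
    (h2 : ∀ q' < q, x.coeff q' = 0) : x.order = q := by
  have hx : x ≠ 0 := fun h => h1 (by simp [h])
  refine le_antisymm (HahnSeries.order_le_of_coeff_ne_zero h1) (le_of_not_gt fun h => ?_)
  exact (mt HahnSeries.coeff_order_eq_zero.mp hx) (h2 _ h)

lemma num_div_mul (n i : ℕ) (hn : 0 < n) : (((i : ℚ) / n) * n).num = i := by
  have hn' : (n : ℚ) ≠ 0 := by exact_mod_cast hn.ne'
  have : ((i : ℚ) / n) * n = (i : ℚ) := by field_simp
  rw [this, Rat.num_natCast]

lemma card_filter_dvd_range {n d : ℕ} (hd : 0 < d) (hdn : d ∣ n) :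
    ((Finset.range n).filter (fun j => d ∣ j)).card = n / d := by
  have himg : (Finset.range n).filter (fun j => d ∣ j) =
      (Finset.range (n / d)).image (fun a => d * a) := by
    ext j
    simp only [Finset.mem_filter, Finset.mem_range, Finset.mem_image]
    constructor
    · rintro ⟨hj, c, rfl⟩
      exact ⟨c, (Nat.lt_div_iff_mul_lt' hdn c).mpr hj, rfl⟩
    · rintro ⟨a, ha, rfl⟩
      exact ⟨(Nat.lt_div_iff_mul_lt' hdn a).mp ha, Dvd.intro a rfl⟩
  rw [himg, Finset.card_image_of_injective _ fun a b hab =>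
    Nat.eq_of_mul_eq_mul_left hd hab, Finset.card_range]

/-- Let `f` be an irreducible Weierstrass polynomial of degree `n = b₀` with Puiseux
characteristic `(b₀,...,b_g)`, `γ` a fixed Newton–Puiseux root of `f` (the other roots
being the twists of `γ` by powers of a primitive `n`-th root of unity `ω`), and `k < g`.
Then the sum `α₃` of the contact orders `O(γ_i, γ)` over all roots `γ_i` with
`O(γ_i, γ) < b_{k+1}/b₀` equals
`(n - l₁)(b₁/b₀) + (l₁ - l₂)(b₂/b₀) + ⋯ + (l_{k-1} - l_k)(b_k/b₀)`. -/
theorem sum_contact_orders (n g : ℕ) (hn : 0 < n) (hg : 1 ≤ g)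
    (f : Polynomial (PowerSeries ℂ)) (hmonic : f.Monic) (hdeg : f.natDegree = n)
    (hW : ∀ j, j < n → PowerSeries.constantCoeff (R := ℂ) (f.coeff j) = 0)
    (hirr : Irreducible f)
    (γ : HahnSeries ℚ ℂ)
    (hγsupp : γ.support ⊆ {q : ℚ | ∃ i : ℕ, 1 ≤ i ∧ q = (i : ℚ) / n})
    (hγ : Polynomial.eval₂ (HahnSeries.ofPowerSeries ℚ ℂ) γ f = 0)
    (ω : ℂ) (hω : IsPrimitiveRoot ω n)
    (b l : ℕ → ℕ)
    (hb0 : b 0 = n) (hl0 : l 0 = n)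
    (hl : ∀ m, m < g → l (m + 1) = Nat.gcd (l m) (b (m + 1)))
    (hlg : l g = 1)
    (hchar : ∀ m, m < g →
      ({i : ℕ | γ.coeff ((i : ℚ) / n) ≠ 0 ∧ ¬ l m ∣ i}.Nonempty ∧
       b (m + 1) = sInf {i : ℕ | γ.coeff ((i : ℚ) / n) ≠ 0 ∧ ¬ l m ∣ i}))
    (k : ℕ) (hk : k < g) :
    (∑ j ∈ (Finset.range n).filter (fun j =>
        ∃ q : ℚ, q < (b (k + 1) : ℚ) / n ∧ (twist n (ω ^ j) γ).coeff q ≠ γ.coeff q),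
      (twist n (ω ^ j) γ - γ).order)
      = ∑ i ∈ Finset.Icc 1 k, ((l (i - 1) : ℚ) - (l i : ℚ)) * ((b i : ℚ) / n) := by
  classical
  have hnQ : (0 : ℚ) < n := by exact_mod_cast hn
  -- basic facts about the chain `l`
  have hldvd : ∀ m, m < g → l (m + 1) ∣ l m := fun m hm => (hl m hm) ▸ Nat.gcd_dvd_left _ _
  have hlb : ∀ m, m < g → l (m + 1) ∣ b (m + 1) := fun m hm => (hl m hm) ▸ Nat.gcd_dvd_right _ _
  have hchain : ∀ a c : ℕ, a ≤ c → c ≤ g → l c ∣ l a := by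
    intro a c hac hcg
    induction c with
    | zero => have : a = 0 := by omega
              simp [this]
    | succ c ih =>
      rcases Nat.eq_or_lt_of_le hac with h | h
      · rw [h]
      · exact dvd_trans (hldvd c (by omega)) (ih (by omega) (by omega))
  have hlpos : ∀ i, i ≤ g → 0 < l i := by
    intro i
    induction i with
    | zero => intro _; simpa [hl0] using hn
    | succ m ih =>
      intro h
      rw [hl m (by omega)]
      exact Nat.gcd_pos_of_pos_left _ (ih (by omega))
  have hln : ∀ i, i ≤ g → l i ∣ n := fun i hig => hl0 ▸ hchain 0 i (Nat.zero_le _) hig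
  -- facts about the characteristic exponents
  have hbmem : ∀ m, m < g → γ.coeff ((b (m + 1) : ℚ) / n) ≠ 0 ∧ ¬ l m ∣ b (m + 1) := by
    intro m hm
    obtain ⟨hne, hEq⟩ := hchar m hm
    have := Nat.sInf_mem hne
    rw [← hEq] at this
    exact this
  have hmin : ∀ m, m < g → ∀ i : ℕ, γ.coeff ((i : ℚ) / n) ≠ 0 → i < b (m + 1) → l m ∣ i := by
    intro m hm i hc hib
    by_contra hnd
    obtain ⟨hne, hEq⟩ := hchar m hm
    have hle : sInf {i : ℕ | γ.coeff ((i : ℚ) / n) ≠ 0 ∧ ¬ l m ∣ i} ≤ i := Nat.sInf_le ⟨hc, hnd⟩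
    rw [← hEq] at hle
    omega
  have hbsucc : ∀ m, 1 ≤ m → m < g → b m < b (m + 1) := by
    intro m h1 hm
    obtain ⟨m', rfl⟩ : ∃ m', m = m' + 1 := ⟨m - 1, by omega⟩
    have h2 := hbmem (m' + 1) hm
    by_contra hle
    push_neg at hle
    rcases Nat.eq_or_lt_of_le hle with h | h
    · exact h2.2 (h ▸ hlb m' (by omega))
    · have := hmin m' (by omega) _ h2.1 h
      exact h2.2 (dvd_trans (hldvd m' (by omega)) this)
  have hbmono : ∀ i j, 1 ≤ i → i < j → j ≤ g → b i < b j := by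
    intro i j h1 hij hjg
    induction j with
    | zero => omega
    | succ j ih =>
      rcases Nat.lt_or_ge i j with h | h
      · exact lt_trans (ih h (by omega)) (hbsucc j (by omega) (by omega))
      · have : i = j := by omega
        subst this
        exact hbsucc i h1 (by omega)
  -- coefficients of the difference
  have hcoeffd : ∀ (j i : ℕ), (twist n (ω ^ j) γ - γ).coeff ((i : ℚ) / n)
      = (ω ^ (j * i) - 1) * γ.coeff ((i : ℚ) / n) := by
    intro j i
    rw [HahnSeries.coeff_sub, twist_coeff, num_div_mul n i hn, zpow_natCast, ← pow_mul]
    ring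
  have hdiffq : ∀ (j : ℕ) (q : ℚ), (twist n (ω ^ j) γ).coeff q ≠ γ.coeff q →
      ∃ i : ℕ, 1 ≤ i ∧ q = (i : ℚ) / n ∧ γ.coeff ((i : ℚ) / n) ≠ 0 ∧ ¬ (n ∣ j * i) := by
    intro j q hq
    have hc : γ.coeff q ≠ 0 := by
      intro h
      exact hq (by rw [twist_coeff, h, mul_zero])
    obtain ⟨i, hi1, rfl⟩ := hγsupp ((HahnSeries.mem_support γ q).mpr hc)
    refine ⟨i, hi1, rfl, hc, ?_⟩
    intro hdvd
    apply hq
    rw [twist_coeff, num_div_mul n i hn, zpow_natCast, ← pow_mul,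
      (hω.pow_eq_one_iff_dvd _).mpr hdvd, one_mul]
  have hndvdb : ∀ m, m < g → ∀ j : ℕ, n ∣ j * l m → ¬ n ∣ j * l (m + 1) →
      ¬ n ∣ j * b (m + 1) := by
    intro m hm j h1 h2 h3
    apply h2
    have : j * l (m + 1) = Nat.gcd (j * l m) (j * b (m + 1)) := by
      rw [hl m hm, Nat.gcd_mul_left]
    rw [this]
    exact Nat.dvd_gcd h1 h3
  have horder : ∀ m, m < g → ∀ j : ℕ, n ∣ j * l m → ¬ n ∣ j * l (m + 1) →
      (twist n (ω ^ j) γ - γ).order = (b (m + 1) : ℚ) / n := by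
    intro m hm j h1 h2
    apply order_eq_of_forall
    · rw [hcoeffd]
      refine mul_ne_zero ?_ (hbmem m hm).1
      intro h
      exact hndvdb m hm j h1 h2 ((hω.pow_eq_one_iff_dvd _).mp (sub_eq_zero.mp h))
    · intro q' hq'
      by_contra hne
      have hne' : (twist n (ω ^ j) γ).coeff q' ≠ γ.coeff q' := by
        intro h
        exact hne (by rw [HahnSeries.coeff_sub, h, sub_self])
      obtain ⟨i, hi1, rfl, hc, hnd⟩ := hdiffq j q' hne'
      have hib : i < b (m + 1) := by
        rwa [div_lt_div_iff_of_pos_right hnQ, Nat.cast_lt] at hq'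
      exact hnd (dvd_trans h1 (mul_dvd_mul_left j (hmin m hm i hc hib)))
  -- the fibers
  set T : ℕ → Finset ℕ := fun i =>
    (Finset.range n).filter (fun j => n ∣ j * l (i - 1) ∧ ¬ n ∣ j * l i) with hT
  have hset : (Finset.range n).filter (fun j =>
        ∃ q : ℚ, q < (b (k + 1) : ℚ) / n ∧ (twist n (ω ^ j) γ).coeff q ≠ γ.coeff q)
      = (Finset.Icc 1 k).biUnion T := by
    ext j
    simp only [Finset.mem_filter, Finset.mem_range, Finset.mem_biUnion, Finset.mem_Icc, hT]
    constructor
    · rintro ⟨hjn, q, hq, hne⟩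
      obtain ⟨i0, hi01, rfl, hc, hnd⟩ := hdiffq j q hne
      have hi0b : i0 < b (k + 1) := by
        rwa [div_lt_div_iff_of_pos_right hnQ, Nat.cast_lt] at hq
      have hk' : ¬ n ∣ j * l k := by
        intro h
        exact hnd (dvd_trans h (mul_dvd_mul_left j (hmin k hk i0 hc hi0b)))
      have hex : ∃ i, ¬ n ∣ j * l i := ⟨k, hk'⟩
      have hfind := Nat.find_spec hex
      have hile : Nat.find hex ≤ k := Nat.find_le hk'
      have hi1 : 1 ≤ Nat.find hex := by
        rcases Nat.eq_zero_or_pos (Nat.find hex) with h0 | h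
        · exfalso
          rw [h0] at hfind
          rw [hl0] at hfind
          exact hfind (dvd_mul_left n j)
        · exact h
      have hprev : n ∣ j * l (Nat.find hex - 1) :=
        not_not.mp (Nat.find_min hex (by omega))
      exact ⟨Nat.find hex, ⟨hi1, hile⟩, hjn, hprev, hfind⟩
    · rintro ⟨i, ⟨hi1, hik⟩, hjn, h1, h2⟩
      obtain ⟨m, rfl⟩ : ∃ m, i = m + 1 := ⟨i - 1, by omega⟩
      have hm : m < g := by omega
      refine ⟨hjn, (b (m + 1) : ℚ) / n, ?_, ?_⟩
      · rw [div_lt_div_iff_of_pos_right hnQ, Nat.cast_lt]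
        exact hbmono (m + 1) (k + 1) (by omega) (by omega) (by omega)
      · have hbnd := hndvdb m hm j (by simpa using h1) h2
        have hc := (hbmem m hm).1
        rw [twist_coeff, num_div_mul n _ hn, zpow_natCast, ← pow_mul]
        intro hEq
        have hEq' : ω ^ (j * b (m + 1)) * γ.coeff ((b (m + 1) : ℚ) / n)
            = 1 * γ.coeff ((b (m + 1) : ℚ) / n) := by rw [one_mul]; exact hEq
        exact hbnd ((hω.pow_eq_one_iff_dvd _).mp (mul_right_cancel₀ hc hEq'))
  rw [hset, Finset.sum_biUnion]
  · apply Finset.sum_congr rfl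
    intro i hi
    simp only [Finset.mem_Icc] at hi
    obtain ⟨m, rfl⟩ : ∃ m, i = m + 1 := ⟨i - 1, by omega⟩
    have hm : m < g := by omega
    have hconst : ∀ j ∈ T (m + 1), (twist n (ω ^ j) γ - γ).order = (b (m + 1) : ℚ) / n := by
      intro j hj
      simp only [hT, Finset.mem_filter] at hj
      exact horder m hm j (by simpa using hj.2.1) hj.2.2
    rw [Finset.sum_congr rfl hconst, Finset.sum_const]
    -- counting
    have hlmpos : 0 < l m := hlpos m (by omega)
    have hlm1pos : 0 < l (m + 1) := hlpos (m + 1) (by omega)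
    have hlmn : l m ∣ n := hln m (by omega)
    have hlm1n : l (m + 1) ∣ n := hln (m + 1) (by omega)
    have hdvd_iff : ∀ d : ℕ, 0 < d → d ∣ n → ∀ j : ℕ, (n ∣ j * d ↔ (n / d) ∣ j) := by
      intro d hd hdn j
      constructor
      · intro h
        have h' : (n / d) * d ∣ j * d := by rwa [Nat.div_mul_cancel hdn]
        exact (Nat.mul_dvd_mul_iff_right hd).mp h'
      · intro h
        have := mul_dvd_mul h (dvd_refl d)
        rwa [Nat.div_mul_cancel hdn] at this
    have hTeq : T (m + 1) = ((Finset.range n).filter (fun j => (n / l m) ∣ j)) \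
        ((Finset.range n).filter (fun j => (n / l (m + 1)) ∣ j)) := by
      ext j
      simp only [hT, Finset.mem_filter, Finset.mem_sdiff, Finset.mem_range,
        Nat.add_sub_cancel]
      constructor
      · rintro ⟨hjn, ha, hb'⟩
        exact ⟨⟨hjn, (hdvd_iff _ hlmpos hlmn j).mp ha⟩,
          fun h => hb' ((hdvd_iff _ hlm1pos hlm1n j).mpr h.2)⟩
      · rintro ⟨⟨hjn, ha⟩, hb'⟩
        exact ⟨hjn, (hdvd_iff _ hlmpos hlmn j).mpr ha,
          fun h => hb' ⟨hjn, (hdvd_iff _ hlm1pos hlm1n j).mp h⟩⟩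
    have hsub : ((Finset.range n).filter (fun j => (n / l (m + 1)) ∣ j)) ⊆
        ((Finset.range n).filter (fun j => (n / l m) ∣ j)) := by
      have hdd : (n / l m) ∣ (n / l (m + 1)) := by
        have hmd : l (m + 1) ∣ l m := hldvd m hm
        have : (n / l m) * (l m / l (m + 1)) = n / l (m + 1) := by
          rw [Nat.div_mul_div_comm hlmn hmd, mul_comm (l m) (l (m + 1)),
            Nat.mul_div_mul_right _ _ hlmpos]
        exact ⟨l m / l (m + 1), this.symm⟩
      intro j hj
      simp only [Finset.mem_filter, Finset.mem_range] at hj ⊢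
      exact ⟨hj.1, dvd_trans hdd hj.2⟩
    have hcard : (T (m + 1)).card = l m - l (m + 1) := by
      rw [hTeq, Finset.card_sdiff_of_subset hsub,
        card_filter_dvd_range (Nat.div_pos (Nat.le_of_dvd hn hlmn) hlmpos)
          (Nat.div_dvd_of_dvd hlmn),
        card_filter_dvd_range (Nat.div_pos (Nat.le_of_dvd hn hlm1n) hlm1pos)
          (Nat.div_dvd_of_dvd hlm1n),
        Nat.div_div_self hlmn hn.ne', Nat.div_div_self hlm1n hn.ne']
    rw [hcard]
    have hle : l (m + 1) ≤ l m := Nat.le_of_dvd hlmpos (hldvd m hm)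
    simp only [Nat.add_sub_cancel]
    rw [nsmul_eq_mul, Nat.cast_sub hle]
  · intro i hi i' hi' hne
    simp only [Finset.coe_Icc, Set.mem_Icc] at hi hi'
    have key : ∀ a a' : ℕ, 1 ≤ a → a' ≤ k → a < a' → Disjoint (T a) (T a') := by
      intro a a' ha ha' haa
      rw [Finset.disjoint_left]
      rintro j hj hj'
      simp only [hT, Finset.mem_filter] at hj hj'
      have hdd : l (a' - 1) ∣ l a := hchain a (a' - 1) (by omega) (by omega)
      exact hj.2.2 (dvd_trans hj'.2.1 (mul_dvd_mul_left j hdd))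
    rcases lt_or_gt_of_ne hne with h | h
    · exact key i i' hi.1 hi'.2 h
    · exact (key i' i hi'.1 hi.2 h).symm

end
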